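/- For every integer n ≥ 3, the Talenti function Q(y) = (1 + |y|²/(n(n−2)))^{−(n−2)/2} is a smooth, strictly positive, radially symmetric function on ℝⁿ satisfying ΔQ(y) + Q(y)^p = 0 for every y ∈ ℝⁿ, where p = (n+2)/(n−2). -/

import Mathlib

/-- The Laplacian of `f : ℝⁿ → ℝ` at `x`: the sum of the second partial derivatives
`∂²f/∂xᵢ²` in the coordinate directions. -/
noncomputable def laplacian {n : ℕ} (f : EuclideanSpace ℝ (Fin n) → ℝ)
    (x : EuclideanSpace ℝ (Fin n)) : ℝ :=
  ∑ i : Fin n,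
    fderiv ℝ (fun y => fderiv ℝ f y (EuclideanSpace.single i 1)) x (EuclideanSpace.single i 1)

/-- For every integer `n ≥ 3`, the Talenti function
`Q(y) = (1 + |y|²/(n(n−2)))^{−(n−2)/2}` is a smooth, strictly positive, radially
symmetric function on `ℝⁿ` satisfying `ΔQ(y) + Q(y)^p = 0` for every `y`, where
`p = (n+2)/(n−2)`. -/
theorem talenti_function_properties (n : ℕ) (hn : 3 ≤ n) (p : ℝ)
    (hp : p = ((n : ℝ) + 2) / ((n : ℝ) - 2))
    (Q : EuclideanSpace ℝ (Fin n) → ℝ)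
    (hQ : ∀ y, Q y = (1 + ‖y‖ ^ 2 / ((n : ℝ) * ((n : ℝ) - 2))) ^ (-(((n : ℝ) - 2) / 2))) :
    ContDiff ℝ (⊤ : ℕ∞) Q ∧
    (∀ y, 0 < Q y) ∧
    (∀ y z, ‖y‖ = ‖z‖ → Q y = Q z) ∧
    (∀ y, laplacian Q y + Q y ^ p = 0) := by
  have hn3 : (3 : ℝ) ≤ (n : ℝ) := by exact_mod_cast hn
  have hn0 : (n : ℝ) ≠ 0 := by linarith
  have h2 : (n : ℝ) - 2 ≠ 0 := by linarith
  set c : ℝ := (n : ℝ) * ((n : ℝ) - 2) with hcdef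
  set α : ℝ := ((n : ℝ) - 2) / 2 with hαdef
  have hc : 0 < c := by
    rw [hcdef]; apply mul_pos <;> linarith
  -- the squared norm as sum of squares
  set N : (EuclideanSpace ℝ (Fin n)) → ℝ := fun y => ∑ i, y i ^ 2 with hNdef
  have hNnn : ∀ y : (EuclideanSpace ℝ (Fin n)), 0 ≤ N y := fun y => Finset.sum_nonneg fun i _ => sq_nonneg _
  have hNnorm : ∀ y : (EuclideanSpace ℝ (Fin n)), ‖y‖ ^ 2 = N y := by
    intro y
    rw [EuclideanSpace.norm_eq, Real.sq_sqrt (Finset.sum_nonneg fun i _ => sq_nonneg _)]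
    simp [hNdef, Real.norm_eq_abs, sq_abs]
  have hA : ∀ y : (EuclideanSpace ℝ (Fin n)), 0 < 1 + N y / c := fun y => by
    have := hNnn y
    have : 0 ≤ N y / c := div_nonneg this hc.le
    linarith
  have hQ' : ∀ y : (EuclideanSpace ℝ (Fin n)), Q y = (1 + N y / c) ^ (-α) := by
    intro y; rw [hQ, hNnorm]
  have hQe : Q = fun y : (EuclideanSpace ℝ (Fin n)) => (1 + N y / c) ^ (-α) := funext hQ'
  -- derivative of N
  have hNd : ∀ x : (EuclideanSpace ℝ (Fin n)), HasFDerivAt N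
      (∑ i, (2 * x i) • (EuclideanSpace.proj i : (EuclideanSpace ℝ (Fin n)) →L[ℝ] ℝ)) x := by
    intro x
    apply HasFDerivAt.fun_sum
    intro i _
    have h1 : HasFDerivAt (fun y : (EuclideanSpace ℝ (Fin n)) => y i) (EuclideanSpace.proj i : (EuclideanSpace ℝ (Fin n)) →L[ℝ] ℝ) x :=
      (EuclideanSpace.proj i : (EuclideanSpace ℝ (Fin n)) →L[ℝ] ℝ).hasFDerivAt
    have h2 := h1.mul h1
    have e1 : (fun y : (EuclideanSpace ℝ (Fin n)) => y i ^ 2) = fun y : (EuclideanSpace ℝ (Fin n)) => y i * y i := by funext y; ring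
    have e2 : (2 * x i) • (EuclideanSpace.proj i : (EuclideanSpace ℝ (Fin n)) →L[ℝ] ℝ)
        = x i • (EuclideanSpace.proj i : (EuclideanSpace ℝ (Fin n)) →L[ℝ] ℝ)
          + x i • (EuclideanSpace.proj i : (EuclideanSpace ℝ (Fin n)) →L[ℝ] ℝ) := by
      rw [two_mul, add_smul]
    rw [e1, e2]; exact h2
  have hLval : ∀ (x : (EuclideanSpace ℝ (Fin n))) (j : Fin n),
      (∑ i, (2 * x i) • (EuclideanSpace.proj i : (EuclideanSpace ℝ (Fin n)) →L[ℝ] ℝ)) (EuclideanSpace.single j 1)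
        = 2 * x j := by
    intro x j
    rw [ContinuousLinearMap.sum_apply]
    simp [EuclideanSpace.single_apply, mul_ite, Finset.sum_ite_eq']
  -- derivative of the radial profile
  have hφ : ∀ s : ℝ, 0 < 1 + s / c →
      HasDerivAt (fun t : ℝ => (1 + t / c) ^ (-α))
        ((-α) * (1 + s / c) ^ (-α - 1) * (1 / c)) s := by
    intro s hs
    have h1 : HasDerivAt (fun t : ℝ => 1 + t / c) (1 / c) s := by
      simpa using ((hasDerivAt_id s).div_const c).const_add 1
    have h2 := (Real.hasDerivAt_rpow_const (p := -α) (Or.inl hs.ne')).comp s h1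
    simpa [Function.comp_def] using h2
  -- derivative of the coefficient function
  have hψ : ∀ s : ℝ, 0 < 1 + s / c →
      HasDerivAt (fun t : ℝ => (-α) * (1 + t / c) ^ (-α - 1) * (1 / c))
        ((-α) * ((-α - 1) * (1 + s / c) ^ (-α - 2) * (1 / c)) * (1 / c)) s := by
    intro s hs
    have h1 : HasDerivAt (fun t : ℝ => 1 + t / c) (1 / c) s := by
      simpa using ((hasDerivAt_id s).div_const c).const_add 1
    have h2 := (Real.hasDerivAt_rpow_const (p := -α - 1) (Or.inl hs.ne')).comp s h1
    have h3 := (h2.const_mul (-α)).mul_const (1 / c)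
    have e : -α - 2 = -α - 1 - 1 := by ring
    rw [e]
    simpa [Function.comp] using h3
  -- first derivative of Q
  have hQd : ∀ x : (EuclideanSpace ℝ (Fin n)), HasFDerivAt Q
      (((-α) * (1 + N x / c) ^ (-α - 1) * (1 / c)) •
        (∑ i, (2 * x i) • (EuclideanSpace.proj i : (EuclideanSpace ℝ (Fin n)) →L[ℝ] ℝ))) x := by
    intro x
    rw [hQe]
    have := (hφ (N x) (hA x)).comp_hasFDerivAt x (hNd x)
    simpa [Function.comp_def] using this
  have hfQ : ∀ (x : (EuclideanSpace ℝ (Fin n))) (j : Fin n), fderiv ℝ Q x (EuclideanSpace.single j 1)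
      = ((-α) * (1 + N x / c) ^ (-α - 1) * (1 / c)) * (2 * x j) := by
    intro x j
    rw [(hQd x).fderiv, ContinuousLinearMap.smul_apply, hLval, smul_eq_mul]
  -- second derivative terms
  have hsecond : ∀ (x : (EuclideanSpace ℝ (Fin n))) (j : Fin n),
      fderiv ℝ (fun y => fderiv ℝ Q y (EuclideanSpace.single j 1)) x (EuclideanSpace.single j 1)
        = ((-α) * (1 + N x / c) ^ (-α - 1) * (1 / c)) * 2
          + (2 * x j) * (((-α) * ((-α - 1) * (1 + N x / c) ^ (-α - 2) * (1 / c)) * (1 / c))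
              * (2 * x j)) := by
    intro x j
    have hge : (fun y : (EuclideanSpace ℝ (Fin n)) => fderiv ℝ Q y (EuclideanSpace.single j 1))
        = fun y : (EuclideanSpace ℝ (Fin n)) => ((-α) * (1 + N y / c) ^ (-α - 1) * (1 / c)) * (2 * y j) := by
      funext y; exact hfQ y j
    rw [hge]
    have h1 : HasFDerivAt (fun y : (EuclideanSpace ℝ (Fin n)) => (-α) * (1 + N y / c) ^ (-α - 1) * (1 / c))
        (((-α) * ((-α - 1) * (1 + N x / c) ^ (-α - 2) * (1 / c)) * (1 / c)) •
          (∑ i, (2 * x i) • (EuclideanSpace.proj i : (EuclideanSpace ℝ (Fin n)) →L[ℝ] ℝ))) x :=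
      (hψ (N x) (hA x)).comp_hasFDerivAt x (hNd x)
    have h2 : HasFDerivAt (fun y : (EuclideanSpace ℝ (Fin n)) => 2 * y j)
        ((2 : ℝ) • (EuclideanSpace.proj j : (EuclideanSpace ℝ (Fin n)) →L[ℝ] ℝ)) x := by
      exact ((EuclideanSpace.proj j : (EuclideanSpace ℝ (Fin n)) →L[ℝ] ℝ).hasFDerivAt).const_mul 2
    have h3 := h1.mul h2
    rw [(h1.fun_mul h2).fderiv]
    simp only [ContinuousLinearMap.add_apply, ContinuousLinearMap.smul_apply]
    rw [hLval]
    simp only [PiLp.proj_apply, EuclideanSpace.single_apply, smul_eq_mul, eq_self_iff_true, if_true]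
    ring
  refine ⟨?_, ?_, ?_, ?_⟩
  · -- smoothness
    rw [hQe, contDiff_iff_contDiffAt]
    intro x
    have hNcd : ContDiff ℝ (⊤ : ℕ∞) N :=
      ContDiff.sum fun i _ => ((EuclideanSpace.proj i : (EuclideanSpace ℝ (Fin n)) →L[ℝ] ℝ).contDiff).pow 2
    have hinner : ContDiff ℝ (⊤ : ℕ∞) (fun y : (EuclideanSpace ℝ (Fin n)) => 1 + N y / c) :=
      contDiff_const.add (hNcd.div_const c)
    exact (Real.contDiffAt_rpow_const_of_ne (hA x).ne').comp x hinner.contDiffAt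
  · intro y
    rw [hQ' y]
    exact Real.rpow_pos_of_pos (hA y) _
  · intro y z h
    rw [hQ, hQ, h]
  · intro x
    have hlap : laplacian Q x
        = 2 * n * ((-α) * (1 + N x / c) ^ (-α - 1) * (1 / c))
          + 4 * N x * ((-α) * ((-α - 1) * (1 + N x / c) ^ (-α - 2) * (1 / c)) * (1 / c)) := by
      unfold laplacian
      rw [Finset.sum_congr rfl fun j _ => hsecond x j]
      rw [Finset.sum_add_distrib, Finset.sum_const, Finset.card_univ, Fintype.card_fin]
      have : ∀ j : Fin n, (2 * x j) *
          (((-α) * ((-α - 1) * (1 + N x / c) ^ (-α - 2) * (1 / c)) * (1 / c)) * (2 * x j))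
          = 4 * ((-α) * ((-α - 1) * (1 + N x / c) ^ (-α - 2) * (1 / c)) * (1 / c)) * x j ^ 2 := by
        intro j; ring
      rw [Finset.sum_congr rfl fun j _ => this j, ← Finset.mul_sum]
      push_cast
      rw [hNdef]
      ring
    have hApos := hA x
    set A : ℝ := 1 + N x / c with hAdef
    have key : (-α) * p = -α - 2 := by
      rw [hp, hαdef]; field_simp; ring
    have hQp : Q x ^ p = A ^ (-α - 2) := by
      rw [hQ' x, ← hAdef, ← Real.rpow_mul hApos.le, key]
    rw [hlap, hQp]
    have hA1 : A ^ (-α - 1) = A ^ (-α - 2) * A := by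
      have e : -α - 1 = (-α - 2) + 1 := by ring
      rw [e, Real.rpow_add_one hApos.ne']
    rw [hA1]
    have hK : 2 * (n : ℝ) * ((-α) * A * (1 / c))
        + 4 * (N x) * ((-α) * ((-α - 1) * (1 / c)) * (1 / c)) + 1 = 0 := by
      rw [hAdef, hαdef, hcdef]
      field_simp
      ring
    calc 2 * (n : ℝ) * ((-α) * (A ^ (-α - 2) * A) * (1 / c))
          + 4 * N x * ((-α) * ((-α - 1) * A ^ (-α - 2) * (1 / c)) * (1 / c)) + A ^ (-α - 2)
        = A ^ (-α - 2) * (2 * (n : ℝ) * ((-α) * A * (1 / c))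
            + 4 * (N x) * ((-α) * ((-α - 1) * (1 / c)) * (1 / c)) + 1) := by ring
      _ = 0 := by rw [hK, mul_zero]
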